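/- arXiv:1803.04082 — 7 statements merged into one kernel-verified Lean document; each statement's English description precedes it below -/
import Mathlib

section
/- Let σ : ℙ¹(ℂ) → ℙ¹(ℂ) be the involution induced by the conjugate-linear map (z,w) ↦ (z̄,w̄) of ℂ², and for A ∈ GL₂(ℂ) let m_A : ℙ¹(ℂ) → ℙ¹(ℂ) be the Möbius transformation induced by A. Let f, g : ℙ¹(ℂ) → ℙ¹(ℂ) be functions satisfying f ∘ σ = σ ∘ f and g ∘ σ = σ ∘ g (this encodes that f and g are defined over ℝ), and assume f has trivial Möbius automorphism group: for every A ∈ GL₂(ℂ), if m_A ∘ f = f ∘ m_A then m_A is the identity of ℙ¹(ℂ). If there exists A ∈ GL₂(ℂ) with g = m_A ∘ f ∘ m_A⁻¹, then there exists B ∈ GL₂(ℂ) all of whose matrix entries are real such that g = m_B ∘ f ∘ m_B⁻¹. -/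
open Projectivization Matrix
open scoped LinearAlgebra.Projectivization

/-- The conjugate-linear map of `ℂ²` given by coordinatewise complex conjugation. -/
noncomputable def conjSemilinear : (Fin 2 → ℂ) →ₛₗ[starRingEnd ℂ] (Fin 2 → ℂ) where
  toFun v := fun i => starRingEnd ℂ (v i)
  map_add' := by intro x y; funext i; simp
  map_smul' := by intro c x; funext i; simp [Pi.smul_apply, smul_eq_mul]

lemma conjSemilinear_injective : Function.Injective conjSemilinear := by
  intro x y h
  funext i
  have h' : starRingEnd ℂ (x i) = starRingEnd ℂ (y i) := congrFun h i
  exact (starRingEnd ℂ).injective h'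

/-- The involution of `ℙ¹(ℂ)` induced by coordinatewise complex conjugation of `ℂ²`. -/
noncomputable def projConj : ℙ ℂ (Fin 2 → ℂ) → ℙ ℂ (Fin 2 → ℂ) :=
  Projectivization.map conjSemilinear conjSemilinear_injective

/-- The Möbius transformation of `ℙ¹(ℂ)` induced by a matrix `A ∈ GL₂(ℂ)`. -/
noncomputable def mob (A : GL (Fin 2) ℂ) : ℙ ℂ (Fin 2 → ℂ) → ℙ ℂ (Fin 2 → ℂ) :=
  Projectivization.map
    ((Matrix.GeneralLinearGroup.toLin A).toLinearEquiv.toLinearMap)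
    (Matrix.GeneralLinearGroup.toLin A).toLinearEquiv.injective

lemma mulVec_ne_zero (A : GL (Fin 2) ℂ) {v : Fin 2 → ℂ} (hv : v ≠ 0) :
    (A : Matrix (Fin 2) (Fin 2) ℂ) *ᵥ v ≠ 0 := by
  intro h
  apply hv
  have h1 : ((A : Matrix (Fin 2) (Fin 2) ℂ))⁻¹ * (A : Matrix (Fin 2) (Fin 2) ℂ) = 1 :=
    Matrix.nonsing_inv_mul _ ((Matrix.isUnit_iff_isUnit_det _).mp (Units.isUnit A))
  have := congrArg (fun w => ((A⁻¹ : GL (Fin 2) ℂ) : Matrix (Fin 2) (Fin 2) ℂ) *ᵥ w) h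
  rw [Matrix.mulVec_mulVec] at this
  simpa [Matrix.mulVec_mulVec, h1] using this

lemma mob_mk (A : GL (Fin 2) ℂ) (v : Fin 2 → ℂ) (hv : v ≠ 0) :
    mob A (Projectivization.mk ℂ v hv) =
      Projectivization.mk ℂ ((A : Matrix (Fin 2) (Fin 2) ℂ) *ᵥ v) (mulVec_ne_zero A hv) := by
  rw [mob, Projectivization.map_mk]
  congr 1

lemma conj_ne_zero {v : Fin 2 → ℂ} (hv : v ≠ 0) : (fun i => starRingEnd ℂ (v i)) ≠ 0 := by
  intro h
  apply hv
  funext i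
  have := congrFun h i
  simpa using (starRingEnd ℂ).injective (by simpa using this)

lemma projConj_mk (v : Fin 2 → ℂ) (hv : v ≠ 0) :
    projConj (Projectivization.mk ℂ v hv) =
      Projectivization.mk ℂ (fun i => starRingEnd ℂ (v i)) (conj_ne_zero hv) := by
  rw [projConj, Projectivization.map_mk]
  rfl

lemma projConj_projConj (x : ℙ ℂ (Fin 2 → ℂ)) : projConj (projConj x) = x := by
  induction x using Projectivization.ind with
  | h v hv =>
    rw [projConj_mk, projConj_mk]
    congr 1
    funext i
    simp

lemma mob_mul (M N : GL (Fin 2) ℂ) (x : ℙ ℂ (Fin 2 → ℂ)) :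
    mob (M * N) x = mob M (mob N x) := by
  induction x using Projectivization.ind with
  | h v hv =>
    rw [mob_mk, mob_mk, mob_mk]
    congr 1
    simp only [Units.val_mul, Matrix.mulVec_mulVec]

lemma mob_one (x : ℙ ℂ (Fin 2 → ℂ)) : mob 1 x = x := by
  induction x using Projectivization.ind with
  | h v hv =>
    rw [mob_mk]
    congr 1
    simp

/-- Entrywise conjugation as a map of `GL₂(ℂ)`. -/
noncomputable def conjGL : GL (Fin 2) ℂ →* GL (Fin 2) ℂ :=
  Units.map (RingHom.mapMatrix (starRingEnd ℂ)).toMonoidHom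

lemma coe_conjGL (A : GL (Fin 2) ℂ) (i j : Fin 2) :
    ((conjGL A : GL (Fin 2) ℂ) : Matrix (Fin 2) (Fin 2) ℂ) i j
      = starRingEnd ℂ ((A : Matrix (Fin 2) (Fin 2) ℂ) i j) := rfl

lemma projConj_mob (M : GL (Fin 2) ℂ) (x : ℙ ℂ (Fin 2 → ℂ)) :
    projConj (mob M x) = mob (conjGL M) (projConj x) := by
  induction x using Projectivization.ind with
  | h v hv =>
    rw [mob_mk, projConj_mk, projConj_mk, mob_mk]
    congr 1
    funext i
    simp [Matrix.mulVec, dotProduct, coe_conjGL, map_sum]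

lemma mob_eq_of_smul {B A : GL (Fin 2) ℂ} {c : ℂ} (hc : c ≠ 0)
    (h : (B : Matrix (Fin 2) (Fin 2) ℂ) = c • (A : Matrix (Fin 2) (Fin 2) ℂ)) :
    mob B = mob A := by
  funext x
  induction x using Projectivization.ind with
  | h v hv =>
    rw [mob_mk, mob_mk]
    rw [Projectivization.mk_eq_mk_iff']
    exact ⟨c, by rw [h]; simp [Matrix.smul_mulVec, mul_add, mul_assoc]⟩

lemma scalar_of_mob_id {C : GL (Fin 2) ℂ} (h : mob C = id) :
    ∃ a : ℂ, a ≠ 0 ∧ (C : Matrix (Fin 2) (Fin 2) ℂ) = a • (1 : Matrix (Fin 2) (Fin 2) ℂ) := by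
  set M := (C : Matrix (Fin 2) (Fin 2) ℂ) with hM
  have key : ∀ (v : Fin 2 → ℂ) (hv : v ≠ 0), ∃ a : ℂ, a • v = M *ᵥ v := by
    intro v hv
    have h2 := congrFun h (Projectivization.mk ℂ v hv)
    rw [mob_mk] at h2
    simpa using (Projectivization.mk_eq_mk_iff' ℂ _ _ _ hv).mp h2
  have h10 : (![1, 0] : Fin 2 → ℂ) ≠ 0 := fun hh => by
    have := congrFun hh 0; simp at this
  have h01 : (![0, 1] : Fin 2 → ℂ) ≠ 0 := fun hh => by
    have := congrFun hh 1; simp at this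
  have h11 : (![1, 1] : Fin 2 → ℂ) ≠ 0 := fun hh => by
    have := congrFun hh 0; simp at this
  obtain ⟨a, ha⟩ := key _ h10
  obtain ⟨b, hb⟩ := key _ h01
  obtain ⟨c, hc⟩ := key _ h11
  have ha0 := congrFun ha 0
  have ha1 := congrFun ha 1
  have hb0 := congrFun hb 0
  have hb1 := congrFun hb 1
  have hc0 := congrFun hc 0
  have hc1 := congrFun hc 1
  simp [Matrix.mulVec, dotProduct, Fin.sum_univ_two] at ha0 ha1 hb0 hb1 hc0 hc1
  -- ha0 : a = M 0 0, ha1 : 0 = M 1 0, hb0 : 0 = M 0 1, hb1 : b = M 1 1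
  -- hc0 : c = M 0 0 + M 0 1, hc1 : c = M 1 0 + M 1 1
  have hane : a ≠ 0 := by
    intro h0
    apply mulVec_ne_zero C h10
    rw [← hM, ← ha, h0, zero_smul]
  have hab : a = b := by
    have e0 : c = a := by rw [hc0, ← hb0, add_zero, ha0]
    have e1 : c = b := by rw [hc1, ← ha1, zero_add, hb1]
    rw [← e0, e1]
  refine ⟨a, hane, ?_⟩
  ext i j
  fin_cases i <;> fin_cases j <;>
    simp [Matrix.one_apply, ← ha0, ← ha1, ← hb0, ← hb1, hab]

/-- Two real rational maps (encoded as `σ`-equivariant self-maps of `ℙ¹(ℂ)`), the first with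
trivial Möbius automorphism group, which are `PGL₂(ℂ)`-conjugate are already
`PGL₂(ℝ)`-conjugate. -/
theorem real_conjugacy_of_complex_conjugacy
    (f g : ℙ ℂ (Fin 2 → ℂ) → ℙ ℂ (Fin 2 → ℂ))
    (hf : f ∘ projConj = projConj ∘ f)
    (hg : g ∘ projConj = projConj ∘ g)
    (htriv : ∀ A : GL (Fin 2) ℂ, mob A ∘ f = f ∘ mob A → mob A = id)
    (hconj : ∃ A : GL (Fin 2) ℂ, g = mob A ∘ f ∘ mob A⁻¹) :
    ∃ B : GL (Fin 2) ℂ, (∀ i j, ((B : Matrix (Fin 2) (Fin 2) ℂ) i j).im = 0) ∧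
      g = mob B ∘ f ∘ mob B⁻¹ := by
  obtain ⟨A, hA⟩ := hconj
  have hApt : ∀ x, g x = mob A (f (mob A⁻¹ x)) := fun x => congrFun hA x
  set Ab := conjGL A with hAb
  have h2 : ∀ x, g x = mob Ab (f (mob Ab⁻¹ x)) := by
    intro x
    have e1 : g x = projConj (g (projConj x)) := by
      have := congrFun hg (projConj x)
      simp only [Function.comp_apply] at this
      rw [← this, projConj_projConj]
    have e2 : projConj (g (projConj x)) = mob Ab (projConj (f (mob A⁻¹ (projConj x)))) := by
      rw [hApt (projConj x), projConj_mob]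
    have e3 : projConj (f (mob A⁻¹ (projConj x))) = f (projConj (mob A⁻¹ (projConj x))) := by
      have := congrFun hf (mob A⁻¹ (projConj x))
      simp only [Function.comp_apply] at this
      exact this.symm
    have e4 : projConj (mob A⁻¹ (projConj x)) = mob Ab⁻¹ x := by
      rw [projConj_mob, projConj_projConj, map_inv]
    rw [e1, e2, e3, e4]
  set C : GL (Fin 2) ℂ := Ab⁻¹ * A with hC
  have hcomm : mob C ∘ f = f ∘ mob C := by
    funext x
    simp only [Function.comp_apply]
    have e2 : mob A (f x) = mob Ab (f (mob C x)) := by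
      have l1 : g (mob A x) = mob A (f x) := by
        rw [hApt (mob A x), ← mob_mul, inv_mul_cancel, mob_one]
      have l2 : g (mob A x) = mob Ab (f (mob C x)) := by
        rw [h2 (mob A x), ← mob_mul]
      rw [← l1, l2]
    have e3 := congrArg (mob Ab⁻¹) e2
    rw [← mob_mul, ← mob_mul, inv_mul_cancel, mob_one] at e3
    exact e3
  have hid := htriv C hcomm
  obtain ⟨a, hane, hCa⟩ := scalar_of_mob_id hid
  have hAall : (A : Matrix (Fin 2) (Fin 2) ℂ)
      = a • ((Ab : GL (Fin 2) ℂ) : Matrix (Fin 2) (Fin 2) ℂ) := by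
    have hmulC : Ab * C = A := by rw [hC, mul_inv_cancel_left]
    calc (A : Matrix (Fin 2) (Fin 2) ℂ)
        = ((Ab * C : GL (Fin 2) ℂ) : Matrix (Fin 2) (Fin 2) ℂ) := by rw [hmulC]
      _ = (Ab : Matrix (Fin 2) (Fin 2) ℂ) * (C : Matrix (Fin 2) (Fin 2) ℂ) := rfl
      _ = (Ab : Matrix (Fin 2) (Fin 2) ℂ) * (a • 1) := by rw [hCa]
      _ = a • ((Ab : GL (Fin 2) ℂ) : Matrix (Fin 2) (Fin 2) ℂ) := by
          rw [Matrix.mul_smul, mul_one]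
  have hent : ∀ i j, (A : Matrix (Fin 2) (Fin 2) ℂ) i j
      = a * starRingEnd ℂ ((A : Matrix (Fin 2) (Fin 2) ℂ) i j) := by
    intro i j
    have := congrFun (congrFun hAall i) j
    simpa [hAb, coe_conjGL, Matrix.smul_apply, smul_eq_mul] using this
  have hentc : ∀ i j, starRingEnd ℂ ((A : Matrix (Fin 2) (Fin 2) ℂ) i j)
      = starRingEnd ℂ a * (A : Matrix (Fin 2) (Fin 2) ℂ) i j := by
    intro i j
    have := congrArg (starRingEnd ℂ) (hent i j)
    simpa using this
  have hAne : ∃ i j, (A : Matrix (Fin 2) (Fin 2) ℂ) i j ≠ 0 := by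
    by_contra hc'
    push_neg at hc'
    have hz : (A : Matrix (Fin 2) (Fin 2) ℂ) = 0 := by ext i j; exact hc' i j
    have hdet := (Matrix.isUnit_iff_isUnit_det _).mp (Units.isUnit A)
    rw [hz] at hdet
    simp at hdet
  have hnorm : starRingEnd ℂ a * a = 1 := by
    obtain ⟨i, j, hij⟩ := hAne
    have hcj : starRingEnd ℂ ((A : Matrix (Fin 2) (Fin 2) ℂ) i j) ≠ 0 := by
      simpa using hij
    have h5 : starRingEnd ℂ ((A : Matrix (Fin 2) (Fin 2) ℂ) i j)
        = (starRingEnd ℂ a * a) * starRingEnd ℂ ((A : Matrix (Fin 2) (Fin 2) ℂ) i j) := by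
      calc starRingEnd ℂ ((A : Matrix (Fin 2) (Fin 2) ℂ) i j)
          = starRingEnd ℂ a * ((A : Matrix (Fin 2) (Fin 2) ℂ) i j) := hentc i j
        _ = starRingEnd ℂ a * (a * starRingEnd ℂ ((A : Matrix (Fin 2) (Fin 2) ℂ) i j)) :=
            congrArg (fun t => starRingEnd ℂ a * t) (hent i j)
        _ = (starRingEnd ℂ a * a) * starRingEnd ℂ ((A : Matrix (Fin 2) (Fin 2) ℂ) i j) := by
            ring
    exact mul_right_cancel₀ hcj (by rw [one_mul]; exact h5.symm)
  obtain ⟨μ, hμ⟩ := IsAlgClosed.exists_pow_nat_eq (starRingEnd ℂ a) (n := 2) two_pos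
  have hμne : μ ≠ 0 := by
    intro h0
    rw [h0] at hμ
    apply hane
    have : starRingEnd ℂ a = 0 := by rw [← hμ]; ring
    simpa using this
  have hμnorm : μ * starRingEnd ℂ μ = 1 := by
    have hsq : (μ * starRingEnd ℂ μ) ^ 2 = 1 := by
      have e : (μ * starRingEnd ℂ μ) ^ 2 = μ ^ 2 * starRingEnd ℂ (μ ^ 2) := by
        rw [map_pow]; ring
      rw [e, hμ]
      simpa using hnorm
    have hs : μ * starRingEnd ℂ μ = (Complex.normSq μ : ℂ) := Complex.mul_conj μ
    rw [hs] at hsq ⊢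
    have hr : (Complex.normSq μ) ^ 2 = 1 := by exact_mod_cast hsq
    have hge : 0 ≤ Complex.normSq μ := Complex.normSq_nonneg μ
    have hfac : (Complex.normSq μ - 1) * (Complex.normSq μ + 1) = 0 := by nlinarith [hr]
    rcases mul_eq_zero.mp hfac with h' | h'
    · have : Complex.normSq μ = 1 := by linarith
      rw [this]; norm_num
    · exfalso; nlinarith
  have hkey : starRingEnd ℂ μ * starRingEnd ℂ a = μ := by
    rw [← hμ]
    have e : starRingEnd ℂ μ * μ ^ 2 = (μ * starRingEnd ℂ μ) * μ := by ring
    rw [e, hμnorm, one_mul]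
  have hinv1 : (μ • (A : Matrix (Fin 2) (Fin 2) ℂ))
      * (μ⁻¹ • ((A⁻¹ : GL (Fin 2) ℂ) : Matrix (Fin 2) (Fin 2) ℂ)) = 1 := by
    rw [Matrix.smul_mul, Matrix.mul_smul, smul_smul, mul_inv_cancel₀ hμne]
    have e : (A : Matrix (Fin 2) (Fin 2) ℂ) * ((A⁻¹ : GL (Fin 2) ℂ) : Matrix (Fin 2) (Fin 2) ℂ)
        = 1 := by exact_mod_cast A.mul_inv
    rw [e, one_smul]
  have hinv2 : (μ⁻¹ • ((A⁻¹ : GL (Fin 2) ℂ) : Matrix (Fin 2) (Fin 2) ℂ))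
      * (μ • (A : Matrix (Fin 2) (Fin 2) ℂ)) = 1 := by
    rw [Matrix.smul_mul, Matrix.mul_smul, smul_smul, inv_mul_cancel₀ hμne]
    have e : ((A⁻¹ : GL (Fin 2) ℂ) : Matrix (Fin 2) (Fin 2) ℂ) * (A : Matrix (Fin 2) (Fin 2) ℂ)
        = 1 := by exact_mod_cast A.inv_mul
    rw [e, one_smul]
  set B : GL (Fin 2) ℂ :=
    ⟨μ • (A : Matrix (Fin 2) (Fin 2) ℂ),
      μ⁻¹ • ((A⁻¹ : GL (Fin 2) ℂ) : Matrix (Fin 2) (Fin 2) ℂ), hinv1, hinv2⟩ with hBdef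
  have hmobB : mob B = mob A := mob_eq_of_smul hμne rfl
  have hBinvcoe : ((B⁻¹ : GL (Fin 2) ℂ) : Matrix (Fin 2) (Fin 2) ℂ)
      = μ⁻¹ • ((A⁻¹ : GL (Fin 2) ℂ) : Matrix (Fin 2) (Fin 2) ℂ) := rfl
  have hmobBinv : mob B⁻¹ = mob A⁻¹ := mob_eq_of_smul (inv_ne_zero hμne) hBinvcoe
  refine ⟨B, ?_, ?_⟩
  · intro i j
    rw [← Complex.conj_eq_iff_im]
    show starRingEnd ℂ ((μ • (A : Matrix (Fin 2) (Fin 2) ℂ)) i j)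
        = (μ • (A : Matrix (Fin 2) (Fin 2) ℂ)) i j
    simp only [Matrix.smul_apply, smul_eq_mul, _root_.map_mul]
    rw [hentc i j, ← mul_assoc, hkey]
  · rw [hA, hmobB, hmobBinv]
end

section
/- Let p, q ∈ ℂ[X] be coprime polynomials and set d := max(deg p, deg q); assume d ≥ 2. Let n ≥ 1 and let ζ ∈ ℂ be a primitive n-th root of unity, and suppose p(ζX)·q(X) = ζ·p(X)·q(ζX) as polynomials (this says that the degree-d rational map f = p/q commutes with the rotation ω(z) = ζz, i.e. ω lies in the Möbius automorphism group of f). Then n ≤ d + 1. -/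
open Polynomial

lemma coeff_comp_C_mul_X (p : Polynomial ℂ) (a : ℂ) (k : ℕ) :
    (p.comp (C a * X)).coeff k = a ^ k * p.coeff k := by
  induction p using Polynomial.induction_on' with
  | add f g hf hg => simp [add_comp, hf, hg, mul_add]
  | monomial m c =>
    simp only [← C_mul_X_pow_eq_monomial, mul_comp, C_comp, pow_comp, X_comp, mul_pow,
      ← C_pow, coeff_C_mul, coeff_X_pow]
    by_cases h : k = m <;> simp [h]; ring

/-- If a polynomial satisfies `f.comp (C a * X) = C u * f`, then every exponent `k`
with nonzero coefficient satisfies `a ^ k = u`. -/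
lemma pow_eq_of_comp_smul (f : Polynomial ℂ) (a u : ℂ)
    (h : f.comp (C a * X) = C u * f) {k : ℕ} (hk : f.coeff k ≠ 0) : a ^ k = u := by
  have := congrArg (fun g => Polynomial.coeff g k) h
  simp only [coeff_comp_C_mul_X, coeff_C_mul] at this
  exact mul_right_cancel₀ hk this

/-- A nonzero polynomial dividing another of the same `natDegree` is a constant multiple. -/
lemma exists_const_of_dvd (f g : Polynomial ℂ) (hf : f ≠ 0) (hg : g ≠ 0)
    (hdvd : f ∣ g) (hdeg : f.natDegree = g.natDegree) :
    ∃ c : ℂ, c ≠ 0 ∧ f = C c * g := by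
  obtain ⟨w, hw⟩ := hdvd
  have hw0 : w ≠ 0 := fun h => hg (by simp [hw, h])
  have hdm : g.natDegree = f.natDegree + w.natDegree := by
    rw [hw, natDegree_mul hf hw0]
  have hwdeg : w.natDegree = 0 := by omega
  obtain ⟨c, hc⟩ := natDegree_eq_zero.mp hwdeg
  have hc0 : c ≠ 0 := fun h => hw0 (by rw [← hc, h, C_0])
  refine ⟨c⁻¹, inv_ne_zero hc0, ?_⟩
  rw [hw, ← hc, mul_comm f, ← mul_assoc, ← C_mul, inv_mul_cancel₀ hc0, C_1, one_mul]

/-- If the degree-`d` rational map `p/q` (with `p, q` coprime, `d = max(deg p, deg q) ≥ 2`)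
commutes with the rotation `z ↦ ζz` for a primitive `n`-th root of unity `ζ`, then
`n ≤ d + 1`. -/
theorem order_of_rotation_automorphism_le
    (p q : Polynomial ℂ) (hpq : IsCoprime p q)
    (d : ℕ) (hd : d = max p.natDegree q.natDegree) (hd2 : 2 ≤ d)
    (n : ℕ) (hn : 1 ≤ n) (ζ : ℂ) (hζ : IsPrimitiveRoot ζ n)
    (hcomm : p.comp (C ζ * X) * q = C ζ * (p * q.comp (C ζ * X))) :
    n ≤ d + 1 := by
  by_contra hlt
  push_neg at hlt
  have hζ0 : ζ ≠ 0 := hζ.ne_zero (by omega)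
  -- p and q are nonzero
  have hp0 : p ≠ 0 := by
    rintro rfl
    have := natDegree_eq_zero_of_isUnit (isCoprime_zero_left.mp hpq)
    simp [this] at hd; omega
  have hq0 : q ≠ 0 := by
    rintro rfl
    have := natDegree_eq_zero_of_isUnit (isCoprime_zero_right.mp hpq)
    simp [this] at hd; omega
  set P := p.comp (C ζ * X) with hP
  set Q := q.comp (C ζ * X) with hQ
  have hPdeg : P.natDegree = p.natDegree := by
    rw [hP, natDegree_comp, natDegree_C_mul_X ζ hζ0, mul_one]
  have hQdeg : Q.natDegree = q.natDegree := by
    rw [hQ, natDegree_comp, natDegree_C_mul_X ζ hζ0, mul_one]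
  have hP0 : P ≠ 0 := fun h => by
    have := coeff_comp_C_mul_X p ζ p.natDegree
    rw [← hP, h, coeff_zero] at this
    exact hp0 (leadingCoeff_eq_zero.mp
      (by simpa [pow_eq_zero_iff, hζ0] using this.symm))
  have hQ0 : Q ≠ 0 := fun h => by
    have := coeff_comp_C_mul_X q ζ q.natDegree
    rw [← hQ, h, coeff_zero] at this
    exact hq0 (leadingCoeff_eq_zero.mp
      (by simpa [pow_eq_zero_iff, hζ0] using this.symm))
  -- P, Q coprime
  have hPQ : IsCoprime P Q := by
    have := hpq.map (eval₂RingHom C (C ζ * X))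
    simpa [coe_eval₂RingHom, hP, hQ, Polynomial.comp] using this
  -- P ∣ p and Q ∣ q
  have hinv : C ζ⁻¹ * C ζ = (1 : Polynomial ℂ) := by
    rw [← C_mul, inv_mul_cancel₀ hζ0, C_1]
  have hPp : P ∣ p := by
    refine hPQ.dvd_of_dvd_mul_right ⟨C ζ⁻¹ * q, ?_⟩
    linear_combination (-(C ζ⁻¹)) * hcomm - (p * Q) * hinv
  have hQq : Q ∣ q := by
    refine hPQ.symm.dvd_of_dvd_mul_right ⟨C ζ * p, ?_⟩
    linear_combination hcomm
  obtain ⟨u, hu0, hPu⟩ := exists_const_of_dvd P p hP0 hp0 hPp hPdeg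
  obtain ⟨v, hv0, hQv⟩ := exists_const_of_dvd Q q hQ0 hq0 hQq hQdeg
  -- relation u = ζ * v
  have huv : u = ζ * v := by
    have h3 : C u * (p * q) = C (ζ * v) * (p * q) := by
      rw [hPu, hQv] at hcomm
      rw [C_mul]; linear_combination hcomm
    have := mul_right_cancel₀ (mul_ne_zero hp0 hq0) h3
    exact C_injective this
  -- exponent relations
  set kp := p.natDegree with hkp
  set kq := q.natDegree with hkq
  have hup : ζ ^ kp = u :=
    pow_eq_of_comp_smul p ζ u hPu (by simpa [hkp] using leadingCoeff_ne_zero.mpr hp0)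
  have hvq : ζ ^ kq = v :=
    pow_eq_of_comp_smul q ζ v hQv (by simpa [hkq] using leadingCoeff_ne_zero.mpr hq0)
  have hkplt : kp < n := by omega
  have hkqlt : kq + 1 < n := by omega
  have hkpq : kp = kq + 1 := by
    refine hζ.pow_inj hkplt hkqlt ?_
    rw [hup, huv, ← hvq, pow_succ, mul_comm]
  have hkq1 : 1 ≤ kq := by omega
  -- constant coefficients vanish
  have hcp : p.coeff 0 = 0 := by
    by_contra h
    have := pow_eq_of_comp_smul p ζ u hPu h
    have : (0 : ℕ) = kp := hζ.pow_inj (by omega) hkplt (by rw [this, hup])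
    omega
  have hcq : q.coeff 0 = 0 := by
    by_contra h
    have := pow_eq_of_comp_smul q ζ v hQv h
    have : (0 : ℕ) = kq := hζ.pow_inj (by omega) (by omega) (by rw [this, hvq])
    omega
  exact not_isUnit_X (hpq.isUnit_of_dvd' (X_dvd_iff.mpr hcp) (X_dvd_iff.mpr hcq))
end

section
/- Let d ≥ 1 and let p, q ∈ ℂ[X] be coprime polynomials with deg p = deg q = d such that ‖p(z)‖ = ‖q(z)‖ for every z ∈ ℂ with ‖z‖ = 1 (i.e., the degree-d rational map f = p/q maps the unit circle into itself and has no zero or pole at ∞). Then there exist c ∈ ℂ with |c| = 1 and points a₁, …, a_d ∈ ℂ with aᵢ ≠ 0 and |aᵢ| ≠ 1 for every i, such that p(X)·∏_{i=1}^{d}(1 − conj(aᵢ)·X) = c·q(X)·∏_{i=1}^{d}(X − aᵢ) in ℂ[X]; equivalently, f(z) = c·∏_{i=1}^{d} (z − aᵢ)/(1 − conj(aᵢ)·z) wherever defined. -/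
open Polynomial Finset

lemma circle_infinite : {z : ℂ | ‖z‖ = 1}.Infinite := by
  apply Set.infinite_of_injective_forall_mem
    (f := fun t : ℝ => (1 - t * Complex.I) / (1 + t * Complex.I))
  case hi =>
    intro s t h
    have hds : (1 + (s:ℂ) * Complex.I) ≠ 0 := by
      intro h0
      have := congrArg Complex.re h0
      simp at this
    have hdt : (1 + (t:ℂ) * Complex.I) ≠ 0 := by
      intro h0
      have := congrArg Complex.re h0
      simp at this
    rw [div_eq_div_iff hds hdt] at h
    have him := congrArg Complex.im h
    simp [Complex.add_im, Complex.mul_im, Complex.mul_re] at him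
    have := congrArg Complex.re h
    exact_mod_cast by linarith [him]
  case hf =>
    intro t
    have hconj : (starRingEnd ℂ) (1 + (t:ℂ) * Complex.I) = 1 - t * Complex.I := by
      simp [Complex.conj_ofReal, sub_eq_add_neg]
    have hd : (1 + (t:ℂ) * Complex.I) ≠ 0 := by
      intro h0
      have := congrArg Complex.re h0
      simp at this
    show ‖(1 - (t:ℂ) * Complex.I) / (1 + t * Complex.I)‖ = 1
    rw [norm_div, ← hconj, RCLike.norm_conj]
    exact div_self (norm_ne_zero_iff.mpr hd)

lemma key_eval (f : Polynomial ℂ) (z : ℂ) (hz : ‖z‖ = 1) :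
    (f.map (starRingEnd ℂ)).reverse.eval z = z ^ f.natDegree * (starRingEnd ℂ) (f.eval z) := by
  have hz0 : z ≠ 0 := by intro h; simp [h] at hz
  have hzi : z⁻¹ ≠ 0 := inv_ne_zero hz0
  letI : Invertible (z⁻¹) := invertibleOfNonzero hzi
  have h1 := eval₂_reverse_mul_pow (RingHom.id ℂ) (z⁻¹) (f.map (starRingEnd ℂ))
  rw [invOf_eq_inv, inv_inv] at h1
  have h2 : (f.map (starRingEnd ℂ)).natDegree = f.natDegree := natDegree_map _
  rw [h2] at h1
  have h3 : eval₂ (RingHom.id ℂ) z ((f.map (starRingEnd ℂ)).reverse)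
      = (f.map (starRingEnd ℂ)).reverse.eval z := rfl
  have h4 : eval₂ (RingHom.id ℂ) z⁻¹ (f.map (starRingEnd ℂ))
      = (starRingEnd ℂ) (f.eval z) := by
    rw [eval₂_eq_eval_map, Polynomial.map_id]
    have : z⁻¹ = (starRingEnd ℂ) z := RCLike.inv_eq_conj hz
    rw [this, Polynomial.eval_map, eval₂_at_apply]
  rw [h3, h4] at h1
  have h5 : (z⁻¹) ^ f.natDegree * z ^ f.natDegree = 1 := by
    rw [← mul_pow, inv_mul_cancel₀ hz0, one_pow]
  calc (f.map (starRingEnd ℂ)).reverse.eval z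
      = (f.map (starRingEnd ℂ)).reverse.eval z * ((z⁻¹) ^ f.natDegree * z ^ f.natDegree) := by
        rw [h5, mul_one]
    _ = z ^ f.natDegree * (starRingEnd ℂ) (f.eval z) := by rw [← mul_assoc, h1]; ring

lemma reverse_X_sub_C' (b : ℂ) : (X - C b).reverse = 1 - C b * X := by
  rw [reverse, natDegree_X_sub_C, reflect_sub]
  have h1 : reflect 1 (X : ℂ[X]) = 1 := by
    rw [← pow_one (X : ℂ[X]), reflect_monomial]
    rw [revAt_le (le_refl 1)]; simp
  have h2 : reflect 1 (C b : ℂ[X]) = C b * X := by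
    rw [reflect_C, pow_one]
  rw [h1, h2]

lemma reverse_prod_X_sub_C {n : ℕ} (g : Fin n → ℂ) (s : Finset (Fin n)) :
    (∏ i ∈ s, (X - C (g i)) : ℂ[X]).reverse = ∏ i ∈ s, (1 - C (g i) * X) := by
  induction s using Finset.induction with
  | empty => simp [reverse, reflect_one]
  | insert _ _ h ih =>
      rw [Finset.prod_insert h, Finset.prod_insert h, reverse_mul_of_domain, ih,
        reverse_X_sub_C']

/-- A degree-`d` rational map `p/q` (with `p, q` coprime of degree `d ≥ 1`) preserving the unit
circle, i.e. `‖p(z)‖ = ‖q(z)‖` whenever `‖z‖ = 1`, is a Blaschke-type product: there are `c` of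
modulus one and nonzero points `a₁, …, a_d` off the unit circle with
`p(X)·∏ᵢ (1 − conj(aᵢ)·X) = c·q(X)·∏ᵢ (X − aᵢ)`. -/
theorem circle_preserving_is_blaschke_product
    (d : ℕ) (hd : 1 ≤ d) (p q : Polynomial ℂ) (hpq : IsCoprime p q)
    (hp : p.natDegree = d) (hq : q.natDegree = d)
    (hcirc : ∀ z : ℂ, ‖z‖ = 1 → ‖p.eval z‖ = ‖q.eval z‖) :
    ∃ (c : ℂ) (a : Fin d → ℂ), ‖c‖ = 1 ∧ (∀ i, a i ≠ 0) ∧ (∀ i, ‖a i‖ ≠ 1) ∧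
      p * ∏ i : Fin d, (1 - C (starRingEnd ℂ (a i)) * X) =
        C c * q * ∏ i : Fin d, (X - C (a i)) := by
  set σ : ℂ →+* ℂ := (starRingEnd ℂ) with hσdef
  have hp0 : p ≠ 0 := by intro h; rw [h, natDegree_zero] at hp; omega
  have hq0 : q ≠ 0 := by intro h; rw [h, natDegree_zero] at hq; omega
  set ps := (p.map σ).reverse with hpsdef
  set qs := (q.map σ).reverse with hqsdef
  -- Step 1 : p * ps = q * qs
  have hmul : p * ps = q * qs := by
    have hroot : {z : ℂ | ‖z‖ = 1} ⊆ {x | IsRoot (p * ps - q * qs) x} := by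
      intro z hz
      simp only [Set.mem_setOf_eq] at hz ⊢
      have h1 := key_eval p z hz
      have h2 := key_eval q z hz
      have hnorm := hcirc z hz
      have hsq : p.eval z * σ (p.eval z) = q.eval z * σ (q.eval z) := by
        rw [hσdef, Complex.mul_conj, Complex.mul_conj]
        norm_cast
        simp only [Complex.normSq_eq_norm_sq, hnorm]
      have heval : (p * ps - q * qs).eval z
          = z ^ d * (p.eval z * σ (p.eval z) - q.eval z * σ (q.eval z)) := by
        simp only [eval_sub, eval_mul, hpsdef, hqsdef, hσdef, h1, h2, hp, hq]
        ring
      simp [IsRoot, heval, hsq]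
    have h0 := eq_zero_of_infinite_isRoot _ (circle_infinite.mono hroot)
    exact sub_eq_zero.mp h0
  -- Step 2 : q ∣ ps, and ps = q * C c'
  have hps0 : ps ≠ 0 := by
    rw [hpsdef, Ne, reverse_eq_zero]; exact map_ne_zero hp0
  have hqdvd : q ∣ ps := hpq.symm.dvd_of_dvd_mul_left ⟨qs, hmul⟩
  obtain ⟨u, hu⟩ := hqdvd
  have hu0 : u ≠ 0 := by rintro rfl; rw [mul_zero] at hu; exact hps0 hu
  have hdeg : ps.natDegree ≤ d := by
    calc ps.natDegree ≤ (p.map σ).natDegree := reverse_natDegree_le _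
      _ = d := by rw [natDegree_map]; exact hp
  have hudeg : u.natDegree = 0 := by
    have h := Polynomial.natDegree_mul hq0 hu0
    rw [← hu, hq] at h
    omega
  set c' := u.coeff 0 with hc'def
  have huC : u = C c' := eq_C_of_natDegree_eq_zero hudeg
  have hc'0 : c' ≠ 0 := by intro h; apply hu0; rw [huC, h, map_zero]
  -- roots of p
  have hcard : Multiset.card p.roots = p.natDegree :=
    (Polynomial.splits_iff_card_roots).mp (IsAlgClosed.splits p)
  set L := p.roots.toList with hLdef
  have hlen : L.length = d := by
    rw [hLdef, Multiset.length_toList, hcard, hp]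
  set a : Fin d → ℂ := fun i => L.get (Fin.cast hlen.symm i) with hadef
  have haroot : ∀ i, p.eval (a i) = 0 := by
    intro i
    have hmem : a i ∈ p.roots := by
      rw [← Multiset.mem_toList]; exact List.get_mem L _
    exact (Polynomial.mem_roots hp0).mp hmem
  have hprodform : ∀ g : ℂ → Polynomial ℂ,
      (p.roots.map g).prod = ∏ i : Fin d, g (a i) := by
    intro g
    have hLcoe : (L : Multiset ℂ) = p.roots := Multiset.coe_toList _
    rw [← hLcoe, Multiset.map_coe, Multiset.prod_coe]
    conv_lhs => rw [← List.ofFn_get L]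
    rw [List.map_ofFn, List.prod_ofFn]
    exact Fintype.prod_equiv (finCongr hlen) _ _ (fun x => rfl)
  set t := p.leadingCoeff with htdef
  have ht0 : t ≠ 0 := leadingCoeff_ne_zero.mpr hp0
  have hσt0 : σ t ≠ 0 := by simp [hσdef, ht0]
  have hpfact : p = C t * ∏ i : Fin d, (X - C (a i)) := by
    rw [← hprodform fun w => X - C w]
    exact (C_leadingCoeff_mul_prod_multiset_X_sub_C (by rw [hcard])).symm
  -- ps in factored form
  have hpsfact : ps = C (σ t) * ∏ i : Fin d, (1 - C (σ (a i)) * X) := by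
    have hmap : p.map σ = C (σ t) * ∏ i : Fin d, (X - C (σ (a i))) := by
      conv_lhs => rw [hpfact]
      rw [Polynomial.map_mul, Polynomial.map_C]
      congr 1
      rw [← coe_mapRingHom, map_prod]
      refine Finset.prod_congr rfl fun i _ => ?_
      simp
    rw [hpsdef, hmap, reverse_mul_of_domain, reverse_C,
      reverse_prod_X_sub_C (fun i => σ (a i))]
  have hqc : q * C c' = C (σ t) * ∏ i : Fin d, (1 - C (σ (a i)) * X) := by
    rw [← huC, ← hu, hpsfact]
  -- ‖c'‖ = 1
  have hc'norm : ‖c'‖ = 1 := by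
    obtain ⟨z, hz1, hz2⟩ := (circle_infinite.diff (finite_setOf_isRoot hq0)).nonempty
    simp only [Set.mem_setOf_eq] at hz1 hz2
    have h1 : ps.eval z = z ^ d * σ (p.eval z) := by
      rw [hpsdef, key_eval p z hz1, hp]
    have h2 : ps.eval z = q.eval z * c' := by
      rw [hu, huC, eval_mul, eval_C]
    have h3 : ‖ps.eval z‖ = ‖q.eval z‖ := by
      rw [h1, norm_mul, norm_pow, hz1, one_pow, one_mul, hσdef, RCLike.norm_conj,
        hcirc z hz1]
    rw [h2, norm_mul] at h3
    have hqz : ‖q.eval z‖ ≠ 0 := by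
      rw [norm_ne_zero_iff]; exact hz2
    exact mul_left_cancel₀ hqz (by rw [h3, mul_one])
  -- a i ≠ 0
  have hane : ∀ i, a i ≠ 0 := by
    intro j hj
    have hdegL : (q * C c').natDegree = d := by
      rw [Polynomial.natDegree_mul hq0 (by simpa using hc'0), natDegree_C, hq, add_zero]
    have hbound : (C (σ t) * ∏ i : Fin d, (1 - C (σ (a i)) * X)).natDegree ≤ d - 1 := by
      refine le_trans (natDegree_C_mul_le _ _) ?_
      refine le_trans (natDegree_prod_le _ _) ?_
      have hterm : ∀ i : Fin d, (1 - C (σ (a i)) * X).natDegree ≤ 1 := by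
        intro i
        refine le_trans (natDegree_sub_le _ _) ?_
        simp only [natDegree_one, max_le_iff]
        exact ⟨Nat.zero_le _, le_trans (natDegree_C_mul_le _ _) natDegree_X_le⟩
      have hzero : (1 - C (σ (a j)) * X).natDegree = 0 := by
        rw [hj]; simp
      have hsum : ∑ i ∈ univ.erase j, (1 - C (σ (a i)) * X).natDegree
          ≤ ((univ : Finset (Fin d)).erase j).card • 1 :=
        Finset.sum_le_card_nsmul _ _ 1 (fun i _ => hterm i)
      have hcards : ((univ : Finset (Fin d)).erase j).card = d - 1 := by
        rw [Finset.card_erase_of_mem (mem_univ j), Finset.card_univ, Fintype.card_fin]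
      calc ∑ i : Fin d, (1 - C (σ (a i)) * X).natDegree
          = (1 - C (σ (a j)) * X).natDegree
              + ∑ i ∈ univ.erase j, (1 - C (σ (a i)) * X).natDegree :=
            (Finset.add_sum_erase univ (fun i => (1 - C (σ (a i)) * X).natDegree) (mem_univ j)).symm
        _ ≤ d - 1 := by
            rw [hzero, zero_add]
            simpa [hcards] using hsum
    rw [hqc] at hdegL
    omega
  -- ‖a i‖ ≠ 1
  have hanorm : ∀ i, ‖a i‖ ≠ 1 := by
    intro i h1
    have hqz : q.eval (a i) = 0 := by
      have h2 := hcirc (a i) h1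
      rw [haroot i, norm_zero] at h2
      exact norm_eq_zero.mp h2.symm
    obtain ⟨u', v', huv⟩ := hpq
    have h3 := congrArg (eval (a i)) huv
    simp [haroot i, hqz] at h3
  -- conclusion
  refine ⟨t * c' / σ t, a, ?_, hane, hanorm, ?_⟩
  · rw [norm_div, norm_mul, hσdef, RCLike.norm_conj, hc'norm, mul_one]
    exact div_self (by rwa [norm_ne_zero_iff])
  · have hcσ : t * c' = (t * c' / σ t) * σ t := (div_mul_cancel₀ (t * c') hσt0).symm
    apply mul_right_cancel₀ (b := C c') (by simpa using hc'0)
    have hCe : (C t : Polynomial ℂ) * C c' = C (t * c' / σ t) * C (σ t) := by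
      rw [← C_mul, ← C_mul, ← hcσ]
    rw [hpfact]
    linear_combination (∏ i : Fin d, (X - C (a i))) * (∏ i : Fin d, (1 - C (σ (a i)) * X)) * hCe
      - C (t * c' / σ t) * (∏ i : Fin d, (X - C (a i))) * hqc
end

section
/- Let d ≥ 1 and let p, q ∈ ℂ[X] be coprime polynomials with deg p = deg q = d. Suppose the rational map f = p/q commutes with the antipodal involution γ(z) = −1/z̄, expressed by the identity conj(p(−1/conj(z)))·p(z) = −conj(q(−1/conj(z)))·q(z) for every z ∈ ℂ with z ≠ 0. Then d is odd, and there exist c ∈ ℂ with |c| = 1 and points a₁, …, a_d ∈ ℂ∖{0} with aᵢ·conj(a_j) ≠ −1 for all i, j, such that p(X)·∏_{i=1}^{d}(1 + conj(aᵢ)·X) = c·q(X)·∏_{i=1}^{d}(X − aᵢ) in ℂ[X]; equivalently, f(z) = c·∏_{i=1}^{d}(z − aᵢ)/(1 + conj(aᵢ)·z) wherever defined. -/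
open Polynomial Finset

private noncomputable def apStar (d : ℕ) (p : Polynomial ℂ) : Polynomial ℂ :=
  reflect d ((p.map (starRingEnd ℂ)).comp (-X))

private lemma ap_eval_map_conj (p : Polynomial ℂ) (w : ℂ) :
    (p.map (starRingEnd ℂ)).eval w = starRingEnd ℂ (p.eval (starRingEnd ℂ w)) := by
  rw [eval_map]
  have h := hom_eval₂ p (RingHom.id ℂ) (starRingEnd ℂ) (starRingEnd ℂ w)
  simp only [RingHom.comp_id, RingHom.id_apply, Complex.conj_conj] at h
  exact h.symm

private lemma ap_natDegree_aux (d : ℕ) (p : Polynomial ℂ) (hp : p.natDegree ≤ d) :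
    ((p.map (starRingEnd ℂ)).comp (-X)).natDegree ≤ d := by
  refine le_trans (natDegree_comp_le) ?_
  have h1 : (p.map (starRingEnd ℂ)).natDegree ≤ d := le_trans (natDegree_map_le) hp
  have h2 : (-X : Polynomial ℂ).natDegree = 1 := by
    rw [natDegree_neg, natDegree_X]
  rw [h2, mul_one]
  exact h1

private lemma ap_eval_star (d : ℕ) (p : Polynomial ℂ) (hp : p.natDegree ≤ d)
    {z : ℂ} (hz : z ≠ 0) :
    (apStar d p).eval z = z ^ d * starRingEnd ℂ (p.eval (-1 / starRingEnd ℂ z)) := by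
  have hz' : (z⁻¹ : ℂ) ≠ 0 := inv_ne_zero hz
  letI : Invertible (z⁻¹ : ℂ) := invertibleOfNonzero hz'
  have h := eval₂_reflect_mul_pow (RingHom.id ℂ) (z⁻¹) d
    ((p.map (starRingEnd ℂ)).comp (-X)) (ap_natDegree_aux d p hp)
  rw [invOf_eq_inv, inv_inv] at h
  have h2 : eval₂ (RingHom.id ℂ) z (reflect d ((p.map (starRingEnd ℂ)).comp (-X)))
      = (apStar d p).eval z := rfl
  have h3 : eval₂ (RingHom.id ℂ) z⁻¹ ((p.map (starRingEnd ℂ)).comp (-X))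
      = ((p.map (starRingEnd ℂ)).comp (-X)).eval z⁻¹ := rfl
  rw [h2, h3] at h
  have h4 : ((p.map (starRingEnd ℂ)).comp (-X)).eval z⁻¹
      = starRingEnd ℂ (p.eval (-1 / starRingEnd ℂ z)) := by
    rw [eval_comp, eval_neg, eval_X, ap_eval_map_conj, map_neg, map_inv₀,
      neg_div, one_div]
  rw [h4] at h
  field_simp at h
  have hzz : z ^ d * z⁻¹ ^ d = 1 := by rw [← mul_pow, mul_inv_cancel₀ hz, one_pow]
  rw [neg_div]
  linear_combination (z ^ d) * h - (eval z (apStar d p)) * hzz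

private lemma ap_natDegree_le (d : ℕ) (p : Polynomial ℂ) (hp : p.natDegree ≤ d) :
    (apStar d p).natDegree ≤ d := by
  apply natDegree_le_iff_coeff_eq_zero.mpr
  intro m hm
  rw [apStar, coeff_reflect, revAt_eq_self_of_lt hm]
  exact coeff_eq_zero_of_natDegree_lt (lt_of_le_of_lt (ap_natDegree_aux d p hp) hm)

/-- A degree-`d` rational map `p/q` (with `p, q` coprime of degree `d ≥ 1`) commuting with the
antipodal involution `γ(z) = −1/z̄`, i.e. satisfying
`conj(p(−1/conj z))·p(z) = −conj(q(−1/conj z))·q(z)` for all `z ≠ 0`, has odd degree and is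
of the form `c·∏ᵢ (z − aᵢ)/(1 + conj(aᵢ)·z)` with `|c| = 1` and `aᵢ·conj(a_j) ≠ −1`. -/
theorem antipodal_preserving_parametrization
    (d : ℕ) (hd : 1 ≤ d) (p q : Polynomial ℂ) (hpq : IsCoprime p q)
    (hp : p.natDegree = d) (hq : q.natDegree = d)
    (hanti : ∀ z : ℂ, z ≠ 0 →
      starRingEnd ℂ (p.eval (-1 / starRingEnd ℂ z)) * p.eval z =
        -(starRingEnd ℂ (q.eval (-1 / starRingEnd ℂ z)) * q.eval z)) :
    Odd d ∧
    ∃ (c : ℂ) (a : Fin d → ℂ), ‖c‖ = 1 ∧ (∀ i, a i ≠ 0) ∧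
      (∀ i j, a i * starRingEnd ℂ (a j) ≠ -1) ∧
      p * ∏ i : Fin d, (1 + C (starRingEnd ℂ (a i)) * X) =
        C c * q * ∏ i : Fin d, (X - C (a i)) := by
  classical
  have hp0 : p ≠ 0 := by intro h; rw [h, natDegree_zero] at hp; omega
  have hq0 : q ≠ 0 := by intro h; rw [h, natDegree_zero] at hq; omega
  have hpd : p.natDegree ≤ d := le_of_eq hp
  have hqd : q.natDegree ≤ d := le_of_eq hq
  -- existence of nonzero points where a nonzero polynomial doesn't vanish
  have hexists : ∀ f : Polynomial ℂ, f ≠ 0 → ∃ z : ℂ, z ≠ 0 ∧ f.eval z ≠ 0 := by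
    intro f hf
    obtain ⟨z, hz⟩ := Infinite.exists_notMem_finset (insert (0:ℂ) f.roots.toFinset)
    refine ⟨z, fun h => hz (by simp [h]), fun h => ?_⟩
    exact hz (Finset.mem_insert_of_mem (Multiset.mem_toFinset.mpr (mem_roots'.mpr ⟨hf, h⟩)))
  -- polynomials agreeing away from zero are equal
  have hinf : ∀ f g : Polynomial ℂ, (∀ z : ℂ, z ≠ 0 → f.eval z = g.eval z) → f = g := by
    intro f g hfg
    apply eq_of_infinite_eval_eq
    exact ((Set.finite_singleton (0:ℂ)).infinite_compl).mono
      (fun z hz => hfg z (by simpa using hz))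
  -- Step A : the functional equation as a polynomial identity
  have hA : apStar d p * p = -(apStar d q * q) := by
    apply hinf
    intro z hz
    rw [eval_mul, eval_neg, eval_mul, ap_eval_star d p hpd hz, ap_eval_star d q hqd hz]
    linear_combination (z ^ d) * hanti z hz
  -- Step B : apStar d p ≠ 0
  have hPne : apStar d p ≠ 0 := by
    obtain ⟨w, hw0, hwp⟩ := hexists p hp0
    have hcw : starRingEnd ℂ w ≠ 0 := by simpa using hw0
    set z : ℂ := -1 / starRingEnd ℂ w with hzdef
    have hz0 : z ≠ 0 := div_ne_zero (by norm_num) hcw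
    have hz1 : -1 / starRingEnd ℂ z = w := by
      rw [hzdef, map_div₀, map_neg, map_one, Complex.conj_conj]
      field_simp
    intro h
    have h1 := ap_eval_star d p hpd hz0
    rw [h, hz1, eval_zero] at h1
    have : starRingEnd ℂ (p.eval w) ≠ 0 := by simpa using hwp
    exact this (by
      rcases mul_eq_zero.mp h1.symm with h2 | h2
      · exact absurd h2 (pow_ne_zero d hz0)
      · exact h2)
  -- Step C : q divides apStar d p, with constant quotient
  have hdvd : q ∣ apStar d p :=
    (hpq.symm).dvd_of_dvd_mul_right ⟨-apStar d q, by linear_combination hA⟩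
  obtain ⟨t, ht⟩ := hdvd
  have htne : t ≠ 0 := by rintro rfl; rw [mul_zero] at ht; exact hPne ht
  have hdegt : t.natDegree = 0 := by
    have h1 : (apStar d p).natDegree ≤ d := ap_natDegree_le d p hpd
    rw [ht, natDegree_mul hq0 htne, hq] at h1
    omega
  set l := t.coeff 0 with hldef
  have htC : t = C l := eq_C_of_natDegree_eq_zero hdegt
  have hl0 : l ≠ 0 := fun h => htne (by rw [htC, h, map_zero])
  have hPeq : apStar d p = C l * q := by rw [ht, htC]; ring
  have hQeq : apStar d q = -(C l * p) := by
    apply mul_left_cancel₀ hq0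
    linear_combination hA - p * hPeq
  -- Step E : d is odd and |l| = 1
  obtain ⟨z₀, hz00, hqz0⟩ := hexists q hq0
  have hcz : starRingEnd ℂ z₀ ≠ 0 := by simpa using hz00
  set w : ℂ := -1 / starRingEnd ℂ z₀ with hwdef
  have hw0 : w ≠ 0 := div_ne_zero (by norm_num) hcz
  have hw2 : -1 / starRingEnd ℂ w = z₀ := by
    rw [hwdef, map_div₀, map_neg, map_one, Complex.conj_conj]
    field_simp
  have e1 : z₀ ^ d * starRingEnd ℂ (p.eval w) = l * q.eval z₀ := by
    have h1 := ap_eval_star d p hpd hz00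
    rw [hPeq] at h1
    rw [eval_mul, eval_C] at h1
    exact h1.symm
  have e2 : w ^ d * starRingEnd ℂ (q.eval z₀) = -(l * p.eval w) := by
    have h1 := ap_eval_star d q hqd hw0
    rw [hQeq, hw2, eval_neg, eval_mul, eval_C] at h1
    linear_combination -h1
  have e1c : (starRingEnd ℂ z₀) ^ d * p.eval w
      = starRingEnd ℂ l * starRingEnd ℂ (q.eval z₀) := by
    have := congrArg (starRingEnd ℂ) e1
    simpa only [map_mul, map_pow, Complex.conj_conj] using this
  have hcA : starRingEnd ℂ (q.eval z₀) ≠ 0 := by simpa using hqz0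
  have key : (-1 : ℂ) ^ d = -(l * starRingEnd ℂ l) := by
    have hwz : w * starRingEnd ℂ z₀ = -1 := by rw [hwdef]; field_simp
    apply mul_right_cancel₀ hcA
    calc (-1:ℂ)^d * starRingEnd ℂ (q.eval z₀)
        = (w * starRingEnd ℂ z₀)^d * starRingEnd ℂ (q.eval z₀) := by rw [hwz]
      _ = (starRingEnd ℂ z₀)^d * (w^d * starRingEnd ℂ (q.eval z₀)) := by ring
      _ = (starRingEnd ℂ z₀)^d * (-(l * p.eval w)) := by rw [e2]
      _ = -(l * ((starRingEnd ℂ z₀)^d * p.eval w)) := by ring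
      _ = -(l * (starRingEnd ℂ l * starRingEnd ℂ (q.eval z₀))) := by rw [e1c]
      _ = -(l * starRingEnd ℂ l) * starRingEnd ℂ (q.eval z₀) := by ring
  have hodd : Odd d := by
    rcases Nat.even_or_odd d with he | ho
    · exfalso
      rw [he.neg_one_pow, Complex.mul_conj] at key
      have h1 : (1 : ℝ) = -(Complex.normSq l) := by
        have := congrArg Complex.re key
        simpa using this
      nlinarith [Complex.normSq_nonneg l]
    · exact ho
  have hnl : ‖l‖ = 1 := by
    rw [hodd.neg_one_pow, Complex.mul_conj] at key
    have h1 : Complex.normSq l = 1 := by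
      have := congrArg Complex.re key
      simpa using this.symm
    have h2 : ‖l‖^2 = 1 := by
      rw [← Complex.sq_norm] at h1
      simpa using h1
    have h3 : (‖l‖ - 1) * (‖l‖ + 1) = 0 := by nlinarith
    rcases mul_eq_zero.mp h3 with h4 | h4
    · linarith
    · exfalso; have := norm_nonneg l; linarith
  -- Step F : roots of p
  have hsplits : Multiset.card p.roots = p.natDegree :=
    splits_iff_card_roots.mp (IsAlgClosed.splits p)
  have hcard : Multiset.card p.roots = d := by rw [hsplits, hp]
  set L := p.roots.toList with hLdef
  have hlen : L.length = d := by rw [hLdef, Multiset.length_toList, hcard]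
  set a : Fin d → ℂ := fun i => L.get (Fin.cast hlen.symm i) with hadef
  have hamem : ∀ i, a i ∈ p.roots := by
    intro i
    have h1 : a i ∈ L := by
      rw [hadef]
      simp only [List.get_eq_getElem]
      exact List.getElem_mem _
    rwa [hLdef, Multiset.mem_toList] at h1
  have haroot : ∀ i, p.eval (a i) = 0 := fun i => (mem_roots'.mp (hamem i)).2
  set lc := p.leadingCoeff with hlcdef
  have hlc0 : lc ≠ 0 := leadingCoeff_ne_zero.mpr hp0
  have hclc : starRingEnd ℂ lc ≠ 0 := by simpa using hlc0
  have hprod : C lc * ∏ i : Fin d, (X - C (a i)) = p := by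
    have h1 : ∏ i : Fin d, (X - C (a i)) = (p.roots.map (fun r => X - C r)).prod := by
      rw [show p.roots = (L : Multiset ℂ) by rw [hLdef, Multiset.coe_toList]]
      rw [Multiset.map_coe, Multiset.prod_coe]
      rw [← Fin.prod_univ_fun_getElem L (fun r => X - C r)]
      exact Fintype.prod_equiv (finCongr hlen.symm) _ _ (fun i => rfl)
    rw [h1]
    exact C_leadingCoeff_mul_prod_multiset_X_sub_C hsplits
  -- Step G : the star identity
  have hstar : C l * q
      = -(C (starRingEnd ℂ lc) * ∏ i : Fin d, (1 + C (starRingEnd ℂ (a i)) * X)) := by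
    apply hinf
    intro z hz
    have hczz : starRingEnd ℂ z ≠ 0 := by simpa using hz
    have h1 := ap_eval_star d p hpd hz
    rw [hPeq, eval_mul, eval_C] at h1
    -- h1 : l * q.eval z = z ^ d * conj (p.eval (-1/conj z))
    have h2 : p.eval (-1 / starRingEnd ℂ z)
        = lc * ∏ i : Fin d, ((-1 / starRingEnd ℂ z) - a i) := by
      conv_lhs => rw [← hprod]
      rw [eval_mul, eval_C, eval_prod]
      simp
    rw [h2] at h1
    have h3 : starRingEnd ℂ (lc * ∏ i : Fin d, ((-1 / starRingEnd ℂ z) - a i))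
        = starRingEnd ℂ lc * ∏ i : Fin d, ((-1 / z) - starRingEnd ℂ (a i)) := by
      rw [map_mul, map_prod]
      congr 1
      refine Finset.prod_congr rfl fun i _ => ?_
      rw [map_sub, map_div₀, map_neg, map_one, Complex.conj_conj]
    rw [h3] at h1
    have h5 : ∏ i : Fin d, (z * ((-1 / z) - starRingEnd ℂ (a i)))
        = ∏ i : Fin d, ((-1 : ℂ) * (1 + starRingEnd ℂ (a i) * z)) :=
      Finset.prod_congr rfl fun i _ => by field_simp; ring
    rw [Finset.prod_mul_distrib, Finset.prod_mul_distrib, Finset.prod_const,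
      Finset.prod_const, Finset.card_univ, Fintype.card_fin, hodd.neg_one_pow] at h5
    -- h5 : z^d * ∏ (-1/z - conj a i) = -1 * ∏ (1 + conj (a i) * z)
    rw [eval_neg, eval_mul, eval_mul, eval_C, eval_C, eval_prod]
    have h6 : ∏ i : Fin d, Polynomial.eval z (1 + C (starRingEnd ℂ (a i)) * X)
        = ∏ i : Fin d, (1 + starRingEnd ℂ (a i) * z) :=
      Finset.prod_congr rfl fun i _ => by simp
    rw [h6]
    calc l * q.eval z
        = z ^ d * (starRingEnd ℂ lc * ∏ i : Fin d, ((-1 / z) - starRingEnd ℂ (a i))) := h1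
      _ = starRingEnd ℂ lc * (z ^ d * ∏ i : Fin d, ((-1 / z) - starRingEnd ℂ (a i))) := by ring
      _ = starRingEnd ℂ lc * (-1 * ∏ i : Fin d, (1 + starRingEnd ℂ (a i) * z)) := by rw [h5]
      _ = -(starRingEnd ℂ lc * ∏ i : Fin d, (1 + starRingEnd ℂ (a i) * z)) := by ring
  -- Step H : the roots are nonzero
  have ha0 : ∀ i, a i ≠ 0 := by
    intro i0 hai
    have hdeg1 : (C l * q).natDegree = d := by rw [natDegree_C_mul hl0, hq]
    have hb : ∀ i : Fin d, (1 + C (starRingEnd ℂ (a i)) * X).natDegree ≤ 1 := by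
      intro i
      refine le_trans (natDegree_add_le _ _) ?_
      simp only [natDegree_one]
      refine max_le (by norm_num) ?_
      exact le_trans (natDegree_C_mul_le _ _) (by simp)
    have hb0 : (1 + C (starRingEnd ℂ (a i0)) * X).natDegree = 0 := by
      rw [hai]; simp
    have hsum : ∑ i : Fin d, (1 + C (starRingEnd ℂ (a i)) * X).natDegree ≤ d - 1 := by
      rw [← Finset.sum_erase_add _ _ (Finset.mem_univ i0), hb0, add_zero]
      refine le_trans (Finset.sum_le_card_nsmul _ _ 1 (fun x _ => hb x)) ?_
      rw [smul_eq_mul, mul_one, Finset.card_erase_of_mem (Finset.mem_univ i0),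
        Finset.card_univ, Fintype.card_fin]
    have hdeg2 : (C l * q).natDegree ≤ d - 1 := by
      rw [hstar]
      rw [natDegree_neg]
      refine le_trans (natDegree_mul_le) ?_
      rw [natDegree_C, zero_add]
      exact le_trans (natDegree_prod_le _ _) hsum
    omega
  -- Step I : no root is antipodal to another
  have haij : ∀ i j, a i * starRingEnd ℂ (a j) ≠ -1 := by
    intro i j hij
    have h1 := congrArg (Polynomial.eval (a i)) hstar
    simp only [eval_mul, eval_neg, eval_C, eval_prod, eval_add, eval_one, eval_X] at h1
    have h2 : ∏ j' : Fin d, (1 + starRingEnd ℂ (a j') * a i) = 0 :=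
      Finset.prod_eq_zero (Finset.mem_univ j) (by rw [mul_comm, hij]; ring)
    rw [h2, mul_zero, neg_zero] at h1
    have hqa : q.eval (a i) = 0 := by
      rcases mul_eq_zero.mp h1 with h | h
      · exact absurd h hl0
      · exact h
    obtain ⟨u, v, huv⟩ := hpq
    have h3 := congrArg (Polynomial.eval (a i)) huv
    simp [haroot i, hqa] at h3
  -- Step J : conclusion
  refine ⟨hodd, -(l * lc) / starRingEnd ℂ lc, a, ?_, ha0, haij, ?_⟩
  · rw [norm_div, norm_neg, norm_mul, hnl, one_mul, RCLike.norm_conj]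
    exact div_self (norm_ne_zero_iff.mpr hlc0)
  · have hc' : starRingEnd ℂ lc * (-(l * lc) / starRingEnd ℂ lc) = -(l * lc) :=
      mul_div_cancel₀ _ hclc
    have h7 : (C (starRingEnd ℂ lc) : Polynomial ℂ) * C (-(l * lc) / starRingEnd ℂ lc)
        = C (-(l * lc)) := by rw [← C_mul, hc']
    have key2 : C (-(l * lc) / starRingEnd ℂ lc) * q
        = C lc * ∏ i : Fin d, (1 + C (starRingEnd ℂ (a i)) * X) := by
      apply mul_left_cancel₀ (a := (C (starRingEnd ℂ lc) : Polynomial ℂ))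
        (fun h => hclc (by simpa using h))
      rw [← mul_assoc, h7]
      simp only [map_neg, map_mul]
      linear_combination (-(C lc : Polynomial ℂ)) * hstar
    conv_lhs => rw [← hprod]
    linear_combination (-(∏ i : Fin d, (X - C (a i)))) * key2
end

section
/- Let X be a metrizable topological space and f : X → X a function whose set of periodic points {x ∈ X : ∃ n ≥ 1, fⁿ(x) = x} is countable. Let h : [0,1] × X → X be such that for every fixed x ∈ X the path t ↦ h(t, x) is continuous, for every t ∈ [0,1] the map h(t, ·) commutes with f (h(t, f(x)) = f(h(t, x)) for all x), and h(1, ·) is the identity of X. Then h(t, x) = x for every t ∈ [0,1] and every periodic point x of f (i.e., every x with fⁿ(x) = x for some n ≥ 1). -/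
open Set Filter Topology

/-- An isotopy `h` through maps commuting with `f`, ending at the identity, must fix every
periodic point of `f`, provided `f` has only countably many periodic points. -/
theorem isotopy_fixes_periodic_points
    {X : Type*} [TopologicalSpace X] [TopologicalSpace.MetrizableSpace X]
    (f : X → X)
    (hcount : Set.Countable {x : X | ∃ n : ℕ, 1 ≤ n ∧ f^[n] x = x})
    (h : ℝ → X → X)
    (hcont : ∀ x : X, ContinuousOn (fun t => h t x) (Set.Icc (0 : ℝ) 1))
    (hcomm : ∀ t ∈ Set.Icc (0 : ℝ) 1, ∀ x : X, h t (f x) = f (h t x))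
    (hone : h 1 = id) :
    ∀ t ∈ Set.Icc (0 : ℝ) 1, ∀ x : X, (∃ n : ℕ, 1 ≤ n ∧ f^[n] x = x) → h t x = x := by
  letI : MetricSpace X := TopologicalSpace.metrizableSpaceMetric X
  intro t ht x hx
  obtain ⟨n, hn, hfx⟩ := hx
  -- the image of the path is preconnected and countable
  set P := {x : X | ∃ n : ℕ, 1 ≤ n ∧ f^[n] x = x}
  have hsub : (fun s => h s x) '' Icc (0:ℝ) 1 ⊆ P := by
    rintro _ ⟨s, hs, rfl⟩
    refine ⟨n, hn, ?_⟩
    have comm : ∀ m : ℕ, h s (f^[m] x) = f^[m] (h s x) := by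
      intro m
      induction m with
      | zero => simp
      | succ k ih =>
        rw [Function.iterate_succ_apply', Function.iterate_succ_apply',
          ← ih, hcomm s hs]
    rw [← comm, hfx]
  have hpre : IsPreconnected ((fun s => h s x) '' Icc (0:ℝ) 1) :=
    (isPreconnected_Icc).image _ (hcont x)
  have hctble : ((fun s => h s x) '' Icc (0:ℝ) 1).Countable := hcount.mono hsub
  -- countable preconnected set in metric space is a subsingleton
  have hsing : ((fun s => h s x) '' Icc (0:ℝ) 1).Subsingleton := by
    rintro a ⟨sa, hsa, rfl⟩ b ⟨sb, hsb, rfl⟩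
    by_contra hne
    set g : X → ℝ := fun y => dist (h sa x) y with hg
    have hgc : Continuous g := continuous_const.dist continuous_id
    have him : IsPreconnected (g '' ((fun s => h s x) '' Icc (0:ℝ) 1)) :=
      hpre.image g hgc.continuousOn
    have himct : (g '' ((fun s => h s x) '' Icc (0:ℝ) 1)).Countable :=
      hctble.image g
    have h0 : (0:ℝ) ∈ g '' ((fun s => h s x) '' Icc (0:ℝ) 1) :=
      ⟨h sa x, ⟨sa, hsa, rfl⟩, by simp [hg]⟩
    have hd : dist (h sa x) (h sb x) ∈ g '' ((fun s => h s x) '' Icc (0:ℝ) 1) :=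
      ⟨h sb x, ⟨sb, hsb, rfl⟩, rfl⟩
    have hdpos : 0 < dist (h sa x) (h sb x) := dist_pos.mpr hne
    have : Icc (0:ℝ) (dist (h sa x) (h sb x)) ⊆ g '' ((fun s => h s x) '' Icc (0:ℝ) 1) := by
      intro y hy
      exact him.Icc_subset h0 hd hy
    have hIccct : (Icc (0:ℝ) (dist (h sa x) (h sb x))).Countable :=
      himct.mono this
    have := Cardinal.mk_le_aleph0_iff.mpr (Set.countable_coe_iff.mpr hIccct)
    rw [Cardinal.mk_Icc_real hdpos] at this
    exact absurd this (not_le.mpr Cardinal.aleph0_lt_continuum)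
  have h1 : x ∈ (fun s => h s x) '' Icc (0:ℝ) 1 := ⟨1, by norm_num, by simp [hone]⟩
  have h2 : h t x ∈ (fun s => h s x) '' Icc (0:ℝ) 1 := ⟨t, ht, rfl⟩
  exact hsing h2 h1
end

section
/- Let μ ∈ ℝ with μ > 1 and define f : ℝ∖{0} → ℝ∖{0} by f(x) = (1/μ)(x + 1/x) (note x + 1/x ≠ 0 for all real x ≠ 0, so all iterates are defined). Then for every x > 0 the iterates fⁿ(x) converge to 1/√(μ−1) as n → ∞, and for every x < 0 the iterates fⁿ(x) converge to −1/√(μ−1) as n → ∞. -/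
open Filter Topology

section helpers

private lemma mobius_bound (a y r : ℝ) (ha : |a| < 1) (hy : |y| ≤ r) (hr : r < 1) :
    |(y - a) / (1 - a * y)| ≤ (|a| + r) / (1 + |a| * r) := by
  have hr0 : 0 ≤ r := le_trans (abs_nonneg y) hy
  have ha0 : 0 ≤ |a| := abs_nonneg a
  have hay : |a * y| ≤ |a| * r := by
    rw [abs_mul]; exact mul_le_mul_of_nonneg_left hy ha0
  have h1 : a * y ≤ |a| * r := le_trans (le_abs_self _) hay
  have h2 : -(|a| * r) ≤ a * y := le_trans (neg_le_neg hay) (neg_abs_le _)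
  have har : |a| * r < 1 := by nlinarith
  have hden : 0 < 1 - a * y := by nlinarith
  have hden2 : (0:ℝ) < 1 + |a| * r := by nlinarith
  rw [abs_div, abs_of_pos hden, div_le_div_iff₀ hden hden2]
  have hy2 : y ^ 2 ≤ r ^ 2 := by nlinarith [abs_nonneg y, sq_abs y]
  have ha2 : a ^ 2 = |a| ^ 2 := (sq_abs a).symm
  have h1a2 : 0 ≤ 1 - a ^ 2 := by nlinarith [sq_abs a]
  have e1 : 1 - a * y ≤ 1 + |a| * r := by linarith
  have e2 : (1 - a * y) ^ 2 ≤ (1 + |a| * r) ^ 2 := by nlinarith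
  have hdiff : 0 ≤ (1 - y ^ 2) * (1 + |a| * r) ^ 2 - (1 - r ^ 2) * (1 - a * y) ^ 2 := by
    have t1 : (1 - r ^ 2) * (1 - a * y) ^ 2 ≤ (1 - r ^ 2) * (1 + |a| * r) ^ 2 :=
      mul_le_mul_of_nonneg_left e2 (by nlinarith)
    have t2 : (1 - r ^ 2) * (1 + |a| * r) ^ 2 ≤ (1 - y ^ 2) * (1 + |a| * r) ^ 2 :=
      mul_le_mul_of_nonneg_right (by linarith) (sq_nonneg _)
    linarith
  have hP : 0 ≤ (1 - a ^ 2) * ((1 - y ^ 2) * (1 + |a| * r) ^ 2 - (1 - r ^ 2) * (1 - a * y) ^ 2) :=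
    mul_nonneg h1a2 hdiff
  have haz : (0:ℝ) = (|a| ^ 2 - a ^ 2) * ((1 - r ^ 2) * (1 - a * y) ^ 2) := by
    rw [sq_abs]; ring
  have key : (y - a) ^ 2 * (1 + |a| * r) ^ 2 ≤ ((|a| + r) * (1 - a * y)) ^ 2 := by
    linarith [hP, haz]
  have keyL : (|y - a| * (1 + |a| * r)) ^ 2 ≤ ((|a| + r) * (1 - a * y)) ^ 2 := by
    rw [mul_pow, sq_abs]; exact key
  have hL : 0 ≤ |y - a| * (1 + |a| * r) := by positivity
  have hR : 0 ≤ (|a| + r) * (1 - a * y) := mul_nonneg (by positivity) hden.le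
  nlinarith [keyL, hL, hR]

private lemma step_eq (μ p x : ℝ) (hμ : 1 < μ) (hp : 0 < p) (hp2 : p^2 * (μ-1) = 1) (hx : 0 < x) :
    ((1/μ) * (x + 1/x) - p) / ((1/μ) * (x + 1/x) + p)
      = ((x-p)/(x+p) * ((x-p)/(x+p) - (μ-2)/μ)) / (1 - (μ-2)/μ * ((x-p)/(x+p))) := by
  have hμ1 : 0 < μ - 1 := by nlinarith
  have hμ' : (0:ℝ) < μ := by linarith
  have hμ0 : μ ≠ 0 := ne_of_gt hμ'
  have hx0 : x ≠ 0 := ne_of_gt hx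
  have hxp : x + p ≠ 0 := by positivity
  have hinv : 0 < 1/x := by positivity
  have hd1 : (0:ℝ) < (1/μ) * (x + 1/x) + p := by positivity
  have hd2 : (0:ℝ) < 1 - (μ-2)/μ * ((x-p)/(x+p)) := by
    have h : 1 - (μ-2)/μ * ((x-p)/(x+p)) = 2*(x + (μ-1)*p)/(μ*(x+p)) := by
      field_simp; ring
    rw [h]; positivity
  rw [div_eq_div_iff (ne_of_gt hd1) (ne_of_gt hd2)]
  field_simp
  linear_combination (-4*x*μ*p) * hp2

end helpers

/-- For `μ > 1` and `f(x) = (1/μ)(x + 1/x)`, every positive orbit converges to `1/√(μ−1)` and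
every negative orbit converges to `−1/√(μ−1)`. -/
theorem orbits_converge_to_attracting_fixed_points
    (μ : ℝ) (hμ : 1 < μ) (f : ℝ → ℝ) (hf : f = fun x => (1 / μ) * (x + 1 / x)) :
    (∀ x : ℝ, 0 < x →
      Filter.Tendsto (fun n : ℕ => f^[n] x) Filter.atTop (nhds (1 / Real.sqrt (μ - 1)))) ∧
    (∀ x : ℝ, x < 0 →
      Filter.Tendsto (fun n : ℕ => f^[n] x) Filter.atTop (nhds (-(1 / Real.sqrt (μ - 1))))) := by
  have hμ1 : (0:ℝ) < μ - 1 := by linarith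
  have hμ0 : (0:ℝ) < μ := by linarith
  set p : ℝ := 1 / Real.sqrt (μ - 1) with hp_def
  have hs : 0 < Real.sqrt (μ - 1) := Real.sqrt_pos.mpr hμ1
  have hp : 0 < p := by positivity
  have hp2 : p ^ 2 * (μ - 1) = 1 := by
    rw [hp_def, div_pow, one_pow, Real.sq_sqrt hμ1.le]
    field_simp
  -- the coefficient a
  set a : ℝ := (μ - 2) / μ with ha_def
  have ha : |a| < 1 := by
    rw [ha_def, abs_div, abs_of_pos hμ0, div_lt_one hμ0]
    rcases abs_cases (μ - 2) with ⟨h, _⟩ | ⟨h, _⟩ <;> linarith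
  -- positivity of orbits
  have hfpos : ∀ z : ℝ, 0 < z → 0 < f z := by
    intro z hz
    rw [hf]
    have : 0 < 1 / z := by positivity
    positivity
  have key : ∀ x : ℝ, 0 < x →
      Filter.Tendsto (fun n : ℕ => f^[n] x) Filter.atTop (nhds p) := by
    intro x hx
    have hpos : ∀ n, 0 < f^[n] x := by
      intro n
      induction n with
      | zero => simpa using hx
      | succ n ih => rw [Function.iterate_succ_apply']; exact hfpos _ ih
    set y : ℕ → ℝ := fun n => (f^[n] x - p) / (f^[n] x + p) with hy_def
    have hylt : ∀ n, |y n| < 1 := by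
      intro n
      have h0 := hpos n
      have h1 : 0 < f^[n] x + p := by linarith
      rw [hy_def]
      simp only
      rw [abs_div, abs_of_pos h1, div_lt_one h1]
      rcases abs_cases (f^[n] x - p) with ⟨h, _⟩ | ⟨h, _⟩ <;> linarith
    set r : ℝ := |y 0| with hr_def
    have hr0 : 0 ≤ r := abs_nonneg _
    have hr1 : r < 1 := hylt 0
    set c : ℝ := (|a| + r) / (1 + |a| * r) with hc_def
    have hcden : (0:ℝ) < 1 + |a| * r := by positivity
    have hc0 : 0 ≤ c := by positivity
    have hc1 : c < 1 := by
      rw [hc_def, div_lt_one hcden]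
      nlinarith [abs_nonneg a]
    -- recursion
    have hrec : ∀ n, y (n + 1) = (y n * (y n - a)) / (1 - a * y n) := by
      intro n
      have hfx : ∀ z : ℝ, f z = (1/μ) * (z + 1/z) := fun z => by rw [hf]
      have h := step_eq μ p (f^[n] x) hμ hp hp2 (hpos n)
      rw [hy_def]
      simp only
      rw [Function.iterate_succ_apply', hfx, h, ← ha_def,
        mul_comm a ((f^[n] x - p) / (f^[n] x + p))]
    -- geometric bound
    have hbound : ∀ n, |y n| ≤ c ^ n * r := by
      intro n
      induction n with
      | zero => simp; exact hr_def.symm.le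
      | succ n ih =>
        have hcn : c ^ n ≤ 1 := pow_le_one₀ hc0 hc1.le
        have hyr : |y n| ≤ r := le_trans ih (by nlinarith)
        have hm := mobius_bound a (y n) r ha hyr hr1
        have : y (n + 1) = y n * ((y n - a) / (1 - a * y n)) := by
          rw [hrec n, mul_div_assoc]
        rw [this, abs_mul]
        calc |y n| * |(y n - a) / (1 - a * y n)| ≤ (c ^ n * r) * ((|a| + r) / (1 + |a| * r)) := by
              apply mul_le_mul ih hm (abs_nonneg _) (by positivity)
          _ = c ^ (n + 1) * r := by rw [hc_def]; ring
    have hy0 : Filter.Tendsto y Filter.atTop (nhds 0) := by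
      apply squeeze_zero_norm (fun n => by simpa using hbound n)
      have := tendsto_pow_atTop_nhds_zero_of_lt_one hc0 hc1
      simpa using this.mul_const r
    -- recover x_n from y_n
    have hx_eq : ∀ n, f^[n] x = p * (1 + y n) / (1 - y n) := by
      intro n
      have h1 : 0 < f^[n] x + p := by have := hpos n; linarith
      have h2 : (1:ℝ) - y n ≠ 0 := by
        have := (abs_lt.mp (hylt n)).2
        intro h
        linarith [h]
      have h3 : y n * (f^[n] x + p) = f^[n] x - p := by
        rw [hy_def]; simp only
        field_simp
      field_simp
      nlinarith [h3]
    have hcont : Filter.Tendsto (fun n => p * (1 + y n) / (1 - y n)) Filter.atTop (nhds p) := by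
      have h1 : Filter.Tendsto (fun n => p * (1 + y n)) Filter.atTop (nhds (p * (1 + 0))) :=
        (tendsto_const_nhds.add hy0).const_mul p
      have h2 : Filter.Tendsto (fun n => 1 - y n) Filter.atTop (nhds (1 - 0)) :=
        tendsto_const_nhds.sub hy0
      have := h1.div h2 (by norm_num)
      exact (by simpa using this : Filter.Tendsto ((fun n => p * (1 + y n)) / fun n => 1 - y n) Filter.atTop (nhds p))
    exact hcont.congr (fun n => (hx_eq n).symm)
  constructor
  · exact key
  · intro x hx
    have hodd : ∀ z : ℝ, f (-z) = -(f z) := by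
      intro z
      rw [hf]
      simp only
      rw [one_div_neg_eq_neg_one_div]
      ring
    have hiter : ∀ n, f^[n] x = -(f^[n] (-x)) := by
      intro n
      induction n with
      | zero => simp
      | succ n ih =>
        rw [Function.iterate_succ_apply', Function.iterate_succ_apply', ih, hodd]
    have := (key (-x) (by linarith)).neg
    exact (this.congr (fun n => (hiter n).symm))
end

section
/- Let μ ∈ ℝ with μ < −1 and define f : ℝ∖{0} → ℝ∖{0} by f(x) = (1/μ)(x + 1/x) (note x + 1/x ≠ 0 for all real x ≠ 0, so all iterates are defined). Set p := 1/√(−μ−1). Then f(p) = −p and f(−p) = p (so {p, −p} is a 2-cycle of f), and for every x ≠ 0 there exists ε ∈ {1, −1} such that the even iterates f^{2n}(x) converge to ε·p as n → ∞; that is, every orbit in ℝ∖{0} converges to the 2-cycle {p, −p}. -/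
open Filter Topology

private lemma hstep_pos {c y : ℝ} (hc : 0 < c) (hy : 0 < y) : 0 < (y + 1/y)/c := by
  positivity

private lemma two_le_add_inv {y : ℝ} (hy : 0 < y) : 2 ≤ y + 1/y := by
  have h1 : y * (1/y) = 1 := by field_simp
  nlinarith [sq_nonneg (y - 1)]

private lemma key_tendsto (c : ℝ) (hc : 1 < c) (p : ℝ) (hp : 0 < p)
    (hpc : p^2 * (c-1) = 1) (x : ℝ) (hx : 0 < x) :
    Tendsto (fun n : ℕ => (fun y : ℝ => (y + 1/y)/c)^[n] x) atTop (nhds p) := by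
  have hc0 : 0 < c := lt_trans one_pos hc
  set h : ℝ → ℝ := fun y => (y + 1/y)/c with hh
  have hq : 0 < 1/p := by positivity
  set q : ℝ := 1/p with hqdef
  have hpq : p * q = 1 := by rw [hqdef]; field_simp
  have hcp : c * p = p + q := by
    rw [hqdef]; field_simp; linear_combination hpc
  set X : ℕ → ℝ := fun n => h^[n] x with hXdef
  have hXs : ∀ n, X (n+1) = h (X n) := fun n => Function.iterate_succ_apply' h n x
  have hXpos : ∀ n, 0 < X n := by
    intro n; induction n with
    | zero => simpa [hXdef] using hx
    | succ n ih => rw [hXs]; exact hstep_pos hc0 ih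
  set B : ℝ := max (x + 1/x) (c/(2*(c-1))) with hBdef
  have hB1 : x + 1/x ≤ B := le_max_left _ _
  have hB2 : c/(2*(c-1)) ≤ B := le_max_right _ _
  have hBpos : 0 < B := lt_of_lt_of_le (by positivity) hB1
  have hB2' : c ≤ B * (2*(c-1)) := (div_le_iff₀ (by nlinarith)).mp hB2
  have hinv : ∀ n, 2/c ≤ X (n+1) ∧ X (n+1) ≤ B := by
    intro n; induction n with
    | zero =>
      rw [hXs 0]
      have hX0 : X 0 = x := rfl
      rw [hX0]
      constructor
      · show 2/c ≤ (x + 1/x)/c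
        gcongr
        exact two_le_add_inv hx
      · show (x + 1/x)/c ≤ B
        calc (x + 1/x)/c ≤ B/c := by gcongr
          _ ≤ B := div_le_self hBpos.le hc.le
    | succ n ih =>
      obtain ⟨h1, h2⟩ := ih
      have hy : 0 < X (n+1) := hXpos (n+1)
      rw [hXs (n+1)]
      constructor
      · show 2/c ≤ (X (n+1) + 1/(X (n+1)))/c
        gcongr
        exact two_le_add_inv hy
      · show (X (n+1) + 1/(X (n+1)))/c ≤ B
        have hinv_y : 1/(X (n+1)) ≤ c/2 := by
          rw [div_le_div_iff₀ hy (by norm_num : (0:ℝ) < 2)]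
          have := (div_le_iff₀ hc0).mp h1
          nlinarith
        rw [div_le_iff₀ hc0]
        nlinarith
  have h2c : 0 < 2/c := by positivity
  set k : ℝ := max ((q - 2/c)/(q + 2/c)) ((B - q)/(B + q)) with hkdef
  have hk1 : k < 1 := by
    apply max_lt
    · rw [div_lt_one (by positivity)]; linarith
    · rw [div_lt_one (by positivity)]; linarith
  have hks : ∀ y, 2/c ≤ y → y ≤ B → |y - q|/(y + q) ≤ k := by
    intro y hy1 hy2
    have hy0 : 0 < y := lt_of_lt_of_le h2c hy1
    have hyq : 0 < y + q := by positivity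
    rcases le_total y q with hle | hle
    · rw [abs_of_nonpos (by linarith)]
      refine le_trans ?_ (le_max_left _ _)
      rw [div_le_div_iff₀ hyq (by positivity)]
      nlinarith [mul_nonneg hq.le (by linarith : (0:ℝ) ≤ y - 2/c)]
    · rw [abs_of_nonneg (by linarith)]
      refine le_trans ?_ (le_max_right _ _)
      rw [div_le_div_iff₀ hyq (by positivity)]
      nlinarith [mul_nonneg hq.le (by linarith : (0:ℝ) ≤ B - y)]
  have hk0 : 0 ≤ k := by
    have hX1 : 0 < X 1 := hXpos 1
    exact le_trans (div_nonneg (abs_nonneg _) (add_pos hX1 hq).le)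
      (hks _ (hinv 0).1 (hinv 0).2)
  have hiden : ∀ y : ℝ, 0 < y →
      (h y - p)/(h y + p) = (y - p)/(y + p) * ((y - q)/(y + q)) := by
    intro y hy
    have hhy : 0 < h y := hstep_pos hc0 hy
    have key1 : (y - p)*(y - q) = y^2 - c*p*y + 1 := by
      linear_combination y * hcp + hpq
    have key2 : (y + p)*(y + q) = y^2 + c*p*y + 1 := by
      linear_combination (-y) * hcp + hpq
    have e1 : h y - p = (y - p)*(y - q)/(c*y) := by
      show (y + 1/y)/c - p = _
      rw [key1]
      field_simp
      ring
    have e2 : h y + p = (y + p)*(y + q)/(c*y) := by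
      show (y + 1/y)/c + p = _
      rw [key2]
      field_simp
      ring
    rw [e1, e2]
    have hyp : y + p ≠ 0 := by positivity
    have hyq : y + q ≠ 0 := by positivity
    have hcy : c*y ≠ 0 := by positivity
    field_simp
  have hwrec : ∀ n, |(X (n+2) - p)/(X (n+2) + p)| ≤ k * |(X (n+1) - p)/(X (n+1) + p)| := by
    intro n
    have hy := hXpos (n+1)
    rw [show X (n+2) = h (X (n+1)) from hXs (n+1), hiden _ hy, abs_mul]
    rw [mul_comm k _]
    apply mul_le_mul_of_nonneg_left ?_ (abs_nonneg _)
    rw [abs_div, abs_of_pos (add_pos hy hq)]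
    exact hks _ (hinv n).1 (hinv n).2
  have hgeo : ∀ n, |(X (n+1) - p)/(X (n+1) + p)| ≤ k^n * |(X 1 - p)/(X 1 + p)| := by
    intro n; induction n with
    | zero => simp
    | succ n ih =>
      calc |(X (n+2) - p)/(X (n+2) + p)|
          ≤ k * |(X (n+1) - p)/(X (n+1) + p)| := hwrec n
        _ ≤ k * (k^n * |(X 1 - p)/(X 1 + p)|) := mul_le_mul_of_nonneg_left ih hk0
        _ = k^(n+1) * |(X 1 - p)/(X 1 + p)| := by ring
  have hbound : ∀ n, |X (n+1) - p| ≤ (B + p) * (k^n * |(X 1 - p)/(X 1 + p)|) := by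
    intro n
    have hy := hXpos (n+1)
    have h2 := (hinv n).2
    have hXp : 0 < X (n+1) + p := add_pos hy hp
    have heq : |X (n+1) - p| = |(X (n+1) - p)/(X (n+1) + p)| * (X (n+1) + p) := by
      rw [abs_div, abs_of_pos hXp, div_mul_cancel₀]
      exact hXp.ne'
    rw [heq]
    calc |(X (n+1) - p)/(X (n+1) + p)| * (X (n+1) + p)
        ≤ (k^n * |(X 1 - p)/(X 1 + p)|) * (B + p) :=
          mul_le_mul (hgeo n) (by linarith) hXp.le
            (mul_nonneg (pow_nonneg hk0 n) (abs_nonneg _))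
      _ = (B + p) * (k^n * |(X 1 - p)/(X 1 + p)|) := by ring
  have hlim0 : Tendsto (fun n : ℕ => (B + p) * (k^n * |(X 1 - p)/(X 1 + p)|))
      atTop (nhds 0) := by
    have h1 : Tendsto (fun n : ℕ => k^n) atTop (nhds 0) :=
      tendsto_pow_atTop_nhds_zero_of_lt_one hk0 hk1
    have h2 := (h1.mul_const (|(X 1 - p)/(X 1 + p)|)).const_mul (B + p)
    simpa using h2
  have hXlim : Tendsto (fun n : ℕ => X (n+1)) atTop (nhds p) := by
    have hub : ∀ n, X (n+1) ≤ p + (B + p) * (k^n * |(X 1 - p)/(X 1 + p)|) := by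
      intro n
      have := (abs_le.mp (hbound n)).2
      linarith
    have hlb : ∀ n, p - (B + p) * (k^n * |(X 1 - p)/(X 1 + p)|) ≤ X (n+1) := by
      intro n
      have := (abs_le.mp (hbound n)).1
      linarith
    have hu : Tendsto (fun n : ℕ => p + (B + p) * (k^n * |(X 1 - p)/(X 1 + p)|))
        atTop (nhds p) := by
      have := (tendsto_const_nhds (x := p) (f := atTop (α := ℕ))).add hlim0
      simpa using this
    have hl : Tendsto (fun n : ℕ => p - (B + p) * (k^n * |(X 1 - p)/(X 1 + p)|))
        atTop (nhds p) := by
      have := (tendsto_const_nhds (x := p) (f := atTop (α := ℕ))).sub hlim0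
      simpa using this
    exact tendsto_of_tendsto_of_tendsto_of_le_of_le hl hu hlb hub
  have := (tendsto_add_atTop_iff_nat 1).mp hXlim
  exact this

/-- For `μ < −1` and `f(x) = (1/μ)(x + 1/x)`, the points `±p` with `p = 1/√(−μ−1)` form a
2-cycle of `f`, and every orbit in `ℝ∖{0}` converges to this 2-cycle: the even iterates of any
`x ≠ 0` converge to `p` or to `−p`. -/
theorem orbits_converge_to_two_cycle
    (μ : ℝ) (hμ : μ < -1) (f : ℝ → ℝ) (hf : f = fun x => (1 / μ) * (x + 1 / x))
    (p : ℝ) (hp : p = 1 / Real.sqrt (-μ - 1)) :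
    f p = -p ∧ f (-p) = p ∧
    ∀ x : ℝ, x ≠ 0 → ∃ ε : ℝ, (ε = 1 ∨ ε = -1) ∧
      Filter.Tendsto (fun n : ℕ => f^[2 * n] x) Filter.atTop (nhds (ε * p)) := by
  have hμ0 : μ ≠ 0 := by intro hcon; rw [hcon] at hμ; norm_num at hμ
  have hc : 1 < -μ := by linarith
  have hc0 : (0:ℝ) < -μ := by linarith
  have hsq : 0 < Real.sqrt (-μ - 1) := Real.sqrt_pos.mpr (by linarith)
  have hp0 : 0 < p := by rw [hp]; positivity
  have hpc : p^2 * (-μ - 1) = 1 := by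
    rw [hp, div_pow, one_pow, Real.sq_sqrt (by linarith : (0:ℝ) ≤ -μ - 1)]
    rw [div_mul_eq_mul_div, one_mul]
    exact div_self (ne_of_gt (by linarith))
  have hpne : p ≠ 0 := hp0.ne'
  have hfp : f p = -p := by
    rw [hf]
    show (1/μ) * (p + 1/p) = -p
    field_simp
    linear_combination -hpc
  have hfmp : f (-p) = p := by
    rw [hf]
    show (1/μ) * (-p + 1/(-p)) = p
    rw [div_neg]
    field_simp
    linear_combination hpc
  refine ⟨hfp, hfmp, ?_⟩
  intro x hx
  set h : ℝ → ℝ := fun y => (y + 1/y)/(-μ) with hhdef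
  have hfh : ∀ z, f z = -(h z) := by
    intro z
    rw [hf, hhdef]
    show (1/μ) * (z + 1/z) = -((z + 1/z)/(-μ))
    rw [div_neg, neg_neg]
    ring
  have hodd : ∀ w, h (-w) = -(h w) := by
    intro w
    show (-w + 1/(-w))/(-μ) = -((w + 1/w)/(-μ))
    rw [div_neg]
    ring
  have hoddn : ∀ n w, h^[n] (-w) = -(h^[n] w) := by
    intro n
    induction n with
    | zero => intro w; simp
    | succ n ih =>
      intro w
      rw [Function.iterate_succ_apply, Function.iterate_succ_apply, hodd, ih]
  have h2 : f^[2] = h^[2] := by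
    funext z
    show f (f z) = h (h z)
    rw [hfh z, hfh, hodd, neg_neg]
  have hiter : ∀ n, f^[2*n] x = h^[2*n] x := by
    intro n
    rw [Function.iterate_mul, Function.iterate_mul, h2]
  have h2n : Tendsto (fun n : ℕ => 2*n) atTop atTop :=
    tendsto_atTop_mono (fun n => by simp only [id_eq]; omega) tendsto_id
  rcases hx.lt_or_gt with hneg | hpos
  · refine ⟨-1, Or.inr rfl, ?_⟩
    have hkey := key_tendsto (-μ) hc p hp0 (by linarith [hpc] : p^2 * (-μ - 1) = 1) (-x) (by linarith)
    have hcomp := hkey.comp h2n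
    simp only [Function.comp_def] at hcomp
    have hneg' := hcomp.neg
    refine hneg'.congr' (by
      filter_upwards with n
      show -(h^[2*n] (-x)) = f^[2*n] x
      rw [hiter n, ← hoddn, neg_neg]) |>.congr' ?_ |>.mono_right ?_
    · rfl
    · rw [show (-1:ℝ) * p = -p by ring]
  · refine ⟨1, Or.inl rfl, ?_⟩
    have hkey := key_tendsto (-μ) hc p hp0 (by linarith [hpc] : p^2 * (-μ - 1) = 1) x hpos
    have hcomp := hkey.comp h2n
    simp only [Function.comp_def] at hcomp
    rw [one_mul]
    exact hcomp.congr (fun n => (hiter n).symm)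
end
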